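/- Let k ≥ 1, let F_k be the free group on k generators, and for g ∈ F_k let |g| denote the length of the reduced word representing g. Let K ⊆ F_k be a finite set such that the number of elements of K of odd reduced word length equals the number of elements of K of even reduced word length. Then the function x : F_k → ℂ defined by x(g) = (−1)^{|g|} satisfies ∑_{s ∈ K} x(s·g) = 0 for every g ∈ F_k, and x is a nonzero bounded function. In particular, such a set K is b-arithmetic in F_k. -/

import Mathlib

noncomputable def negOne : ℂˣ := -1

noncomputable def phiHom (k : ℕ) : FreeGroup (Fin k) →* ℂˣ :=
  FreeGroup.lift (fun _ => negOne)

lemma phiHom_eq (k : ℕ) (g : FreeGroup (Fin k)) :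
    ((phiHom k g : ℂˣ) : ℂ) = (-1 : ℂ) ^ FreeGroup.norm g := by
  have h1 : phiHom k g = negOne ^ FreeGroup.norm g := by
    conv_lhs => rw [← FreeGroup.mk_toWord (x := g)]
    rw [phiHom, FreeGroup.lift_mk]
    have : FreeGroup.norm g = (FreeGroup.toWord g).length := rfl
    rw [this, ← List.length_map (as := FreeGroup.toWord g)
      (f := fun x => cond x.2 negOne negOne⁻¹)]
    apply List.prod_eq_pow_card
    intro x hx
    simp only [List.mem_map] at hx
    obtain ⟨a, _, rfl⟩ := hx
    have : (negOne : ℂˣ)⁻¹ = negOne := by simp [negOne]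
    cases a.2 <;> simp [this]
  rw [h1]
  push_cast [negOne]
  ring_nf

/- STATEMENT 14: Let `K` be a finite subset of the free group `F_k` (`k ≥ 1`) having as
many elements of odd reduced word length as of even reduced word length. Then
`x g = (-1) ^ |g|` (with `|g| = FreeGroup.norm g`) is a nonzero bounded solution of the
system `A(K)`; in particular `K` is b-arithmetic in `F_k`. -/
theorem stmt_14 (k : ℕ) (hk : 1 ≤ k) (K : Finset (FreeGroup (Fin k)))
    (hbal : (K.filter fun g => Odd (FreeGroup.norm g)).card =
      (K.filter fun g => Even (FreeGroup.norm g)).card) :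
    (∀ g : FreeGroup (Fin k),
        ∑ s ∈ K, ((-1 : ℂ) ^ FreeGroup.norm (s * g)) = 0) ∧
      (fun g : FreeGroup (Fin k) => ((-1 : ℂ) ^ FreeGroup.norm g)) ≠ 0 ∧
      (∃ M : ℝ, ∀ g : FreeGroup (Fin k),
        ‖((-1 : ℂ) ^ FreeGroup.norm g)‖ ≤ M) := by
  have hsumK : ∑ s ∈ K, ((-1 : ℂ) ^ FreeGroup.norm s) = 0 := by
    rw [← Finset.sum_filter_add_sum_filter_not K (fun g => Odd (FreeGroup.norm g))]
    have hodd : ∑ s ∈ K.filter (fun g => Odd (FreeGroup.norm g)),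
        ((-1 : ℂ) ^ FreeGroup.norm s) =
        (K.filter fun g => Odd (FreeGroup.norm g)).card • (-1 : ℂ) := by
      apply Finset.sum_eq_card_nsmul
      intro a ha
      simp only [Finset.mem_filter] at ha
      exact Odd.neg_one_pow ha.2
    have heven : ∑ s ∈ K.filter (fun g => ¬ Odd (FreeGroup.norm g)),
        ((-1 : ℂ) ^ FreeGroup.norm s) =
        (K.filter fun g => ¬ Odd (FreeGroup.norm g)).card • (1 : ℂ) := by
      apply Finset.sum_eq_card_nsmul
      intro a ha
      simp only [Finset.mem_filter, Nat.not_odd_iff_even] at ha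
      exact Even.neg_one_pow ha.2
    have hfe : (K.filter fun g => ¬ Odd (FreeGroup.norm g)) =
        (K.filter fun g => Even (FreeGroup.norm g)) := by
      simp [Nat.not_odd_iff_even]
    rw [hodd, heven, hfe, ← hbal]
    simp
  refine ⟨?_, ?_, ⟨1, ?_⟩⟩
  · intro g
    have : ∀ s : FreeGroup (Fin k), ((-1 : ℂ) ^ FreeGroup.norm (s * g)) =
        ((-1 : ℂ) ^ FreeGroup.norm s) * ((-1 : ℂ) ^ FreeGroup.norm g) := by
      intro s
      rw [← phiHom_eq, ← phiHom_eq, ← phiHom_eq, map_mul]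
      push_cast
      ring
    simp_rw [this, ← Finset.sum_mul, hsumK, zero_mul]
  · intro h
    have := congrFun h 1
    simp [FreeGroup.norm_one] at this
  · intro g
    rw [norm_pow]
    simp
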